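/- Let 0 < ρ ≤ 1 and let W = {(1/2, ρ/4), (1/2, 3ρ/4)} ⊆ Q (two points stacked along the short direction of the board). Then there exists a set B ⊆ Q with |B| = 2 such that μ({q ∈ Q : infDist(q, B) < infDist(q, W)}) > ρ/2. (In the two-point game, Wilma loses if she stacks her two points along the short side.) -/

import Mathlib

open MeasureTheory Metric Set intervalIntegral
open scoped ENNReal

/-- The point `(x, y)` in the Euclidean plane. -/
noncomputable def pt (x y : ℝ) : EuclideanSpace ℝ (Fin 2) :=
  (WithLp.equiv 2 (Fin 2 → ℝ)).symm ![x, y]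

/-- The rectangular board `[0,1] × [0,ρ]`. -/
def board (ρ : ℝ) : Set (EuclideanSpace ℝ (Fin 2)) :=
  {q | q 0 ∈ Set.Icc (0:ℝ) 1 ∧ q 1 ∈ Set.Icc (0:ℝ) ρ}

lemma pt_apply_zero (x y : ℝ) : pt x y 0 = x := by simp [pt]

lemma pt_apply_one (x y : ℝ) : pt x y 1 = y := by simp [pt]

lemma dist_pt_lt (q : EuclideanSpace ℝ (Fin 2)) (x1 y1 x2 y2 : ℝ)
    (h : (q 0 - x1)^2 + (q 1 - y1)^2 < (q 0 - x2)^2 + (q 1 - y2)^2) :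
    dist q (pt x1 y1) < dist q (pt x2 y2) := by
  rw [EuclideanSpace.dist_eq, EuclideanSpace.dist_eq]
  apply Real.sqrt_lt_sqrt (by positivity)
  simpa [Fin.sum_univ_two, pt, Real.dist_eq, sq_abs] using h

lemma trap_vol (a b c1 d1 c2 d2 : ℝ) (hab : a ≤ b)
    (h : ∀ x ∈ Set.Ioo a b, c1 + d1 * x ≤ c2 + d2 * x) :
    volume (regionBetween (fun x => c1 + d1 * x) (fun x => c2 + d2 * x) (Set.Ioo a b)) =
      ENNReal.ofReal ((c2 - c1) * (b - a) + (d2 - d1) * (b^2 - a^2) / 2) := by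
  have hint : ∀ c d : ℝ, IntegrableOn (fun x => c + d * x) (Set.Ioo a b) volume := fun c d =>
    ((continuous_const.add (continuous_const.mul continuous_id)).integrableOn_Icc).mono_set
      Set.Ioo_subset_Icc_self
  rw [Measure.volume_eq_prod, volume_regionBetween_eq_integral (hint c1 d1) (hint c2 d2)
    measurableSet_Ioo h]
  congr 1
  have heq : ∀ x : ℝ, ((fun x => c2 + d2 * x) - fun x => c1 + d1 * x) x
      = (c2 - c1) + (d2 - d1) * x := fun x => by simp; ring
  rw [funext heq, ← MeasureTheory.integral_Ioc_eq_integral_Ioo,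
    ← intervalIntegral.integral_of_le hab,
    intervalIntegral.integral_add intervalIntegrable_const (intervalIntegrable_id.const_mul _)]
  rw [intervalIntegral.integral_const_mul, integral_id, intervalIntegral.integral_const]
  simp
  ring

lemma rb_mem {f g : ℝ → ℝ} {a b : ℝ} {p : ℝ × ℝ}
    (h : p ∈ regionBetween f g (Set.Ioo a b)) :
    (a < p.1 ∧ p.1 < b) ∧ f p.1 < p.2 ∧ p.2 < g p.1 := by
  obtain ⟨h1, h2⟩ := h
  exact ⟨h1, h2⟩

lemma rb_disj {f1 g1 f2 g2 : ℝ → ℝ} {a b c d : ℝ} (h : b ≤ c) :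
    Disjoint (regionBetween f1 g1 (Set.Ioo a b)) (regionBetween f2 g2 (Set.Ioo c d)) := by
  rw [Set.disjoint_left]
  rintro ⟨x, y⟩ h1 h2
  obtain ⟨⟨_, hb⟩, _⟩ := rb_mem h1
  obtain ⟨⟨hc, _⟩, _⟩ := rb_mem h2
  exact absurd (hb.trans_le h) (lt_asymm hc)

/-- measurable affine region between -/
lemma rb_meas (a b c1 d1 c2 d2 : ℝ) :
    MeasurableSet (regionBetween (fun x => c1 + d1 * x) (fun x => c2 + d2 * x) (Set.Ioo a b)) :=
  measurableSet_regionBetween (by fun_prop) (by fun_prop) measurableSet_Ioo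

noncomputable def e2 : EuclideanSpace ℝ (Fin 2) ≃ᵐ ℝ × ℝ :=
  (MeasurableEquiv.toLp 2 (Fin 2 → ℝ)).symm.trans MeasurableEquiv.finTwoArrow

lemma e2_mp : MeasurePreserving e2 volume volume :=
  (volume_preserving_finTwoArrow ℝ).comp (EuclideanSpace.volume_preserving_symm_measurableEquiv_toLp (Fin 2))

lemma e2_apply (q : EuclideanSpace ℝ (Fin 2)) : e2 q = (q 0, q 1) := rfl

/-- `b2 = (1/2-ρ/5, 2ρ/5)` beats `w1 = (1/2, ρ/4)` above the line `y = 11ρ/24 - 2/3 + 4x/3`. -/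
lemma beats_b2w1 {ρ x y : ℝ} (hρ : 0 < ρ) (h : 11*ρ/24 - 2/3 + 4/3 * x < y) :
    (x - (1/2 - ρ/5))^2 + (y - 2*ρ/5)^2 < (x - 1/2)^2 + (y - ρ/4)^2 := by
  nlinarith [mul_pos hρ (sub_pos.2 h)]

lemma beats_b2w2 {ρ x y : ℝ} (hρ : 0 < ρ) (h : y < 29*ρ/56 + 2/7 + (-4/7) * x) :
    (x - (1/2 - ρ/5))^2 + (y - 2*ρ/5)^2 < (x - 1/2)^2 + (y - 3*ρ/4)^2 := by
  nlinarith [mul_pos hρ (sub_pos.2 h)]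

lemma beats_b1w1 {ρ x y : ℝ} (hρ : 0 < ρ) (h : 27*ρ/56 + 2/7 + (-4/7) * x < y) :
    (x - (1/2 + ρ/5))^2 + (y - 3*ρ/5)^2 < (x - 1/2)^2 + (y - ρ/4)^2 := by
  nlinarith [mul_pos hρ (sub_pos.2 h)]

lemma beats_b1w2 {ρ x y : ℝ} (hρ : 0 < ρ) (h : y < 13*ρ/24 - 2/3 + 4/3 * x) :
    (x - (1/2 + ρ/5))^2 + (y - 3*ρ/5)^2 < (x - 1/2)^2 + (y - 3*ρ/4)^2 := by
  nlinarith [mul_pos hρ (sub_pos.2 h)]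

set_option maxHeartbeats 2000000 in
/-- In the two-point game, Wilma loses if she stacks her two points along the
short side of the board: against `W = {(1/2, ρ/4), (1/2, 3ρ/4)}`, Barney can
place two points claiming strictly more than half the board. -/
theorem stmt_17 (ρ : ℝ) (hρ0 : 0 < ρ) (hρ1 : ρ ≤ 1)
    (W : Set (EuclideanSpace ℝ (Fin 2)))
    (hW : W = {pt (1/2) (ρ/4), pt (1/2) (3*ρ/4)}) :
    ∃ B : Set (EuclideanSpace ℝ (Fin 2)), B ⊆ board ρ ∧ B.Finite ∧ B.ncard = 2 ∧
      volume {q | q ∈ board ρ ∧ infDist q B < infDist q W} > ENNReal.ofReal (ρ / 2) := by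
  subst hW
  set w1 := pt (1/2) (ρ/4) with hw1def
  set w2 := pt (1/2) (3*ρ/4) with hw2def
  set b1 := pt (1/2 + ρ/5) (3*ρ/5) with hb1def
  set b2 := pt (1/2 - ρ/5) (2*ρ/5) with hb2def
  refine ⟨{b1, b2}, ?_, Set.toFinite _, ?_, ?_⟩
  · rintro p (rfl | rfl) <;>
      refine ⟨⟨?_, ?_⟩, ?_, ?_⟩ <;>
      simp only [hb1def, hb2def, pt_apply_zero, pt_apply_one] <;> linarith
  · refine Set.ncard_pair (fun h => ?_)
    have := congrArg (fun q : EuclideanSpace ℝ (Fin 2) => q 0) h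
    simp only [hb1def, hb2def, pt_apply_zero] at this
    linarith
  -- main volume estimate
  have hρ2 : (0:ℝ) < 14 - 7*ρ := by linarith
  set m : ℝ := 4*ρ/(14 - 7*ρ) with hmdef
  have hm : m * (14 - 7*ρ) = 4*ρ := by
    rw [hmdef]; field_simp [show (14:ℝ) - ρ*7 ≠ 0 by linarith]
  have hm0 : 0 ≤ m := by rw [hmdef]; positivity
  have hmle : 7*m ≤ 4*ρ := by nlinarith [hm, hm0, hρ1]
  -- slab boundaries
  -- lines: chord : 45ρ/56 + (-m) x ; chordm : (11ρ/56 + m) + (-m) x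
  -- YA : 13ρ/24 - 2/3 + 4/3 x ; YB : 29ρ/56 + 2/7 - 4/7 x
  -- Yb2 : 11ρ/24 - 2/3 + 4/3 x ; Yb1 : 27ρ/56 + 2/7 - 4/7 x
  set S1 := regionBetween (fun x : ℝ => 0 + 0 * x) (fun x : ℝ => 45*ρ/56 + (-m) * x)
      (Set.Ioo 0 (1/2 - 11*ρ/32)) with hS1def
  set S2 := regionBetween (fun x : ℝ => 11*ρ/24 - 2/3 + (4/3) * x)
      (fun x : ℝ => 45*ρ/56 + (-m) * x) (Set.Ioo (1/2 - 11*ρ/32) (1/2 - ρ/4)) with hS2def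
  set S3 := regionBetween (fun x : ℝ => 11*ρ/24 - 2/3 + (4/3) * x)
      (fun x : ℝ => 29*ρ/56 + 2/7 + (-4/7) * x) (Set.Ioo (1/2 - ρ/4) (1/2 - ρ/80)) with hS3def
  set S4 := regionBetween (fun x : ℝ => 11*ρ/24 - 2/3 + (4/3) * x)
      (fun x : ℝ => 13*ρ/24 - 2/3 + (4/3) * x) (Set.Ioo (1/2 - ρ/80) (1/2 + ρ/80)) with hS4def
  set S5 := regionBetween (fun x : ℝ => 27*ρ/56 + 2/7 + (-4/7) * x)
      (fun x : ℝ => 13*ρ/24 - 2/3 + (4/3) * x) (Set.Ioo (1/2 + ρ/80) (1/2 + ρ/4)) with hS5def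
  set S6 := regionBetween (fun x : ℝ => 11*ρ/56 + m + (-m) * x)
      (fun x : ℝ => 13*ρ/24 - 2/3 + (4/3) * x) (Set.Ioo (1/2 + ρ/4) (1/2 + 11*ρ/32)) with hS6def
  set S7 := regionBetween (fun x : ℝ => 11*ρ/56 + m + (-m) * x) (fun x : ℝ => ρ + 0 * x)
      (Set.Ioo (1/2 + 11*ρ/32) 1) with hS7def
  -- the claimed set contains the preimage of the union
  have hsub : e2 ⁻¹' (S1 ∪ S2 ∪ S3 ∪ S4 ∪ S5 ∪ S6 ∪ S7) ⊆
      {q | q ∈ board ρ ∧ infDist q {b1, b2} < infDist q {w1, w2}} := by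
    -- helper: winning by distances
    have key : ∀ q : EuclideanSpace ℝ (Fin 2),
        ((dist q b1 < dist q w1 ∧ dist q b1 < dist q w2) ∨
         (dist q b2 < dist q w1 ∧ dist q b2 < dist q w2)) →
        infDist q {b1, b2} < infDist q {w1, w2} := by
      intro q h
      obtain ⟨w, hw, hweq⟩ := (Set.toFinite {w1, w2}).isCompact.exists_infDist_eq_dist
        ⟨w1, Set.mem_insert _ _⟩ q
      rw [hweq]
      rcases h with ⟨h1, h2⟩ | ⟨h1, h2⟩
      · refine lt_of_le_of_lt (infDist_le_dist_of_mem (Set.mem_insert _ _)) ?_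
        rcases hw with rfl | hw
        · exact h1
        · rw [Set.mem_singleton_iff] at hw; subst hw; exact h2
      · refine lt_of_le_of_lt
          (infDist_le_dist_of_mem (Set.mem_insert_iff.2 (Or.inr rfl))) ?_
        rcases hw with rfl | hw
        · exact h1
        · rw [Set.mem_singleton_iff] at hw; subst hw; exact h2
    intro q hq
    simp only [Set.preimage_union, Set.mem_union, Set.mem_preimage] at hq
    rw [e2_apply] at hq
    set x := q 0 with hxdef
    set y := q 1 with hydef
    -- chord is below YB on the left : 45ρ/56 - m x ≤ 29ρ/56 + 2/7 - 4x/7 when x ≤ 1/2 - ρ/4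
    have chord_le_YB : ∀ t : ℝ, t ≤ 1/2 - ρ/4 →
        45*ρ/56 + (-m) * t ≤ 29*ρ/56 + 2/7 + (-4/7) * t := by
      intro t ht
      have h47 : 0 ≤ 4/7 - m := by linarith
      nlinarith [hm, mul_nonneg h47 (by linarith : (0:ℝ) ≤ 1/2 - ρ/4 - t)]
    -- mirrored chord is above Yb1 on the right
    have chordm_ge_Yb1 : ∀ t : ℝ, 1/2 + ρ/4 ≤ t →
        27*ρ/56 + 2/7 + (-4/7) * t ≤ 11*ρ/56 + m + (-m) * t := by
      intro t ht
      have h47 : 0 ≤ 4/7 - m := by linarith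
      nlinarith [hm, mul_nonneg h47 (by linarith : (0:ℝ) ≤ t - (1/2 + ρ/4))]
    rcases hq with ((((((h | h) | h) | h) | h) | h) | h)
    all_goals obtain ⟨⟨hxa, hxb⟩, hy1, hy2⟩ := rb_mem h
    all_goals simp only at hy1 hy2
    -- S1
    · have hmx : 0 ≤ m * x := mul_nonneg hm0 hxa.le
      refine ⟨⟨⟨by linarith, by linarith⟩, by linarith, by linarith⟩, key q (Or.inr ⟨?_, ?_⟩)⟩
      · exact dist_pt_lt q _ _ _ _ (beats_b2w1 hρ0 (by nlinarith))
      · exact dist_pt_lt q _ _ _ _ (beats_b2w2 hρ0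
          (by nlinarith [chord_le_YB x (by linarith)]))
    -- S2
    · have hmx : 0 ≤ m * x := mul_nonneg hm0 (by linarith)
      refine ⟨⟨⟨by linarith, by linarith⟩, by linarith, by linarith⟩, key q (Or.inr ⟨?_, ?_⟩)⟩
      · exact dist_pt_lt q _ _ _ _ (beats_b2w1 hρ0 (by linarith))
      · exact dist_pt_lt q _ _ _ _ (beats_b2w2 hρ0
          (by nlinarith [chord_le_YB x (by linarith)]))
    -- S3
    · refine ⟨⟨⟨by linarith, by linarith⟩, by linarith, by linarith⟩, key q (Or.inr ⟨?_, ?_⟩)⟩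
      · exact dist_pt_lt q _ _ _ _ (beats_b2w1 hρ0 (by linarith))
      · exact dist_pt_lt q _ _ _ _ (beats_b2w2 hρ0 (by linarith))
    -- S4
    · refine ⟨⟨⟨by linarith, by linarith⟩, by linarith, by linarith⟩, ?_⟩
      rcases lt_or_ge y (29*ρ/56 + 2/7 + (-4/7) * x) with hcase | hcase
      · exact key q (Or.inr ⟨dist_pt_lt q _ _ _ _ (beats_b2w1 hρ0 (by linarith)),
          dist_pt_lt q _ _ _ _ (beats_b2w2 hρ0 hcase)⟩)
      · exact key q (Or.inl ⟨dist_pt_lt q _ _ _ _ (beats_b1w1 hρ0 (by linarith)),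
          dist_pt_lt q _ _ _ _ (beats_b1w2 hρ0 (by linarith))⟩)
    -- S5
    · refine ⟨⟨⟨by linarith, by linarith⟩, by linarith, by linarith⟩, key q (Or.inl ⟨?_, ?_⟩)⟩
      · exact dist_pt_lt q _ _ _ _ (beats_b1w1 hρ0 (by linarith))
      · exact dist_pt_lt q _ _ _ _ (beats_b1w2 hρ0 (by linarith))
    -- S6
    · have hkey := chordm_ge_Yb1 x (by linarith)
      have hmx : 0 ≤ m * (1 - x) := mul_nonneg hm0 (by linarith)
      refine ⟨⟨⟨by linarith, by linarith⟩, by nlinarith, by linarith⟩,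
        key q (Or.inl ⟨?_, ?_⟩)⟩
      · exact dist_pt_lt q _ _ _ _ (beats_b1w1 hρ0 (by linarith))
      · exact dist_pt_lt q _ _ _ _ (beats_b1w2 hρ0 (by linarith))
    -- S7
    · have hkey := chordm_ge_Yb1 x (by linarith)
      have hmx : 0 ≤ m * (1 - x) := mul_nonneg hm0 (by linarith)
      refine ⟨⟨⟨by linarith, by linarith⟩, by nlinarith, by linarith⟩,
        key q (Or.inl ⟨?_, ?_⟩)⟩
      · exact dist_pt_lt q _ _ _ _ (beats_b1w1 hρ0 (by linarith))
      · exact dist_pt_lt q _ _ _ _ (beats_b1w2 hρ0 (by linarith))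
  -- volumes of the slabs
  have hv1 : volume S1 = ENNReal.ofReal ((45*ρ/56 - 0) * ((1/2 - 11*ρ/32) - 0)
      + (-m - 0) * ((1/2 - 11*ρ/32)^2 - 0^2) / 2) := by
    rw [hS1def]
    refine trap_vol _ _ _ _ _ _ (by linarith) ?_
    rintro t ⟨ht1, ht2⟩
    nlinarith [hm, mul_le_mul_of_nonneg_left ht2.le hm0, mul_nonneg hm0 ht1.le]
  have hv2 : volume S2 = ENNReal.ofReal ((45*ρ/56 - (11*ρ/24 - 2/3)) * ((1/2 - ρ/4) - (1/2 - 11*ρ/32))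
      + (-m - 4/3) * ((1/2 - ρ/4)^2 - (1/2 - 11*ρ/32)^2) / 2) := by
    rw [hS2def]
    refine trap_vol _ _ _ _ _ _ (by linarith) ?_
    rintro t ⟨ht1, ht2⟩
    nlinarith [hm, mul_le_mul_of_nonneg_left ht2.le (by linarith : (0:ℝ) ≤ 4/3 + m)]
  have hv3 : volume S3 = ENNReal.ofReal (((29*ρ/56 + 2/7) - (11*ρ/24 - 2/3)) * ((1/2 - ρ/80) - (1/2 - ρ/4))
      + (-4/7 - 4/3) * ((1/2 - ρ/80)^2 - (1/2 - ρ/4)^2) / 2) := by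
    rw [hS3def]
    refine trap_vol _ _ _ _ _ _ (by linarith) ?_
    rintro t ⟨ht1, ht2⟩
    linarith
  have hv4 : volume S4 = ENNReal.ofReal (((13*ρ/24 - 2/3) - (11*ρ/24 - 2/3)) * ((1/2 + ρ/80) - (1/2 - ρ/80))
      + (4/3 - 4/3) * ((1/2 + ρ/80)^2 - (1/2 - ρ/80)^2) / 2) := by
    rw [hS4def]
    refine trap_vol _ _ _ _ _ _ (by linarith) ?_
    rintro t ⟨ht1, ht2⟩
    linarith
  have hv5 : volume S5 = ENNReal.ofReal (((13*ρ/24 - 2/3) - (27*ρ/56 + 2/7)) * ((1/2 + ρ/4) - (1/2 + ρ/80))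
      + (4/3 - (-4/7)) * ((1/2 + ρ/4)^2 - (1/2 + ρ/80)^2) / 2) := by
    rw [hS5def]
    refine trap_vol _ _ _ _ _ _ (by linarith) ?_
    rintro t ⟨ht1, ht2⟩
    linarith
  have hv6 : volume S6 = ENNReal.ofReal (((13*ρ/24 - 2/3) - (11*ρ/56 + m)) * ((1/2 + 11*ρ/32) - (1/2 + ρ/4))
      + (4/3 - (-m)) * ((1/2 + 11*ρ/32)^2 - (1/2 + ρ/4)^2) / 2) := by
    rw [hS6def]
    refine trap_vol _ _ _ _ _ _ (by linarith) ?_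
    rintro t ⟨ht1, ht2⟩
    nlinarith [hm, mul_le_mul_of_nonneg_left ht1.le (by linarith : (0:ℝ) ≤ 4/3 + m)]
  have hv7 : volume S7 = ENNReal.ofReal ((ρ - (11*ρ/56 + m)) * (1 - (1/2 + 11*ρ/32))
      + (0 - (-m)) * (1^2 - (1/2 + 11*ρ/32)^2) / 2) := by
    rw [hS7def]
    refine trap_vol _ _ _ _ _ _ (by linarith) ?_
    rintro t ⟨ht1, ht2⟩
    nlinarith [hm, mul_le_mul_of_nonneg_left ht1.le hm0]
  -- measurability and disjointness
  have m1 := rb_meas 0 (1/2 - 11*ρ/32) 0 0 (45*ρ/56) (-m)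
  have m2 := rb_meas (1/2 - 11*ρ/32) (1/2 - ρ/4) (11*ρ/24 - 2/3) (4/3) (45*ρ/56) (-m)
  have m3 := rb_meas (1/2 - ρ/4) (1/2 - ρ/80) (11*ρ/24 - 2/3) (4/3) (29*ρ/56 + 2/7) (-4/7)
  have m4 := rb_meas (1/2 - ρ/80) (1/2 + ρ/80) (11*ρ/24 - 2/3) (4/3) (13*ρ/24 - 2/3) (4/3)
  have m5 := rb_meas (1/2 + ρ/80) (1/2 + ρ/4) (27*ρ/56 + 2/7) (-4/7) (13*ρ/24 - 2/3) (4/3)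
  have m6 := rb_meas (1/2 + ρ/4) (1/2 + 11*ρ/32) (11*ρ/56 + m) (-m) (13*ρ/24 - 2/3) (4/3)
  have m7 := rb_meas (1/2 + 11*ρ/32) 1 (11*ρ/56 + m) (-m) ρ 0
  rw [← hS1def] at m1; rw [← hS2def] at m2; rw [← hS3def] at m3; rw [← hS4def] at m4
  rw [← hS5def] at m5; rw [← hS6def] at m6; rw [← hS7def] at m7
  have hd12 : Disjoint S1 S2 := rb_disj le_rfl
  have hd13 : Disjoint S1 S3 := rb_disj (by linarith)
  have hd14 : Disjoint S1 S4 := rb_disj (by linarith)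
  have hd15 : Disjoint S1 S5 := rb_disj (by linarith)
  have hd16 : Disjoint S1 S6 := rb_disj (by linarith)
  have hd17 : Disjoint S1 S7 := rb_disj (by linarith)
  have hd23 : Disjoint S2 S3 := rb_disj le_rfl
  have hd24 : Disjoint S2 S4 := rb_disj (by linarith)
  have hd25 : Disjoint S2 S5 := rb_disj (by linarith)
  have hd26 : Disjoint S2 S6 := rb_disj (by linarith)
  have hd27 : Disjoint S2 S7 := rb_disj (by linarith)
  have hd34 : Disjoint S3 S4 := rb_disj le_rfl
  have hd35 : Disjoint S3 S5 := rb_disj (by linarith)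
  have hd36 : Disjoint S3 S6 := rb_disj (by linarith)
  have hd37 : Disjoint S3 S7 := rb_disj (by linarith)
  have hd45 : Disjoint S4 S5 := rb_disj le_rfl
  have hd46 : Disjoint S4 S6 := rb_disj (by linarith)
  have hd47 : Disjoint S4 S7 := rb_disj (by linarith)
  have hd56 : Disjoint S5 S6 := rb_disj le_rfl
  have hd57 : Disjoint S5 S7 := rb_disj (by linarith)
  have hd67 : Disjoint S6 S7 := rb_disj le_rfl
  have D7 : Disjoint (S1 ∪ S2 ∪ S3 ∪ S4 ∪ S5 ∪ S6) S7 :=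
    ((((hd17.union_left hd27).union_left hd37).union_left hd47).union_left hd57).union_left hd67
  have D6 : Disjoint (S1 ∪ S2 ∪ S3 ∪ S4 ∪ S5) S6 :=
    (((hd16.union_left hd26).union_left hd36).union_left hd46).union_left hd56
  have D5 : Disjoint (S1 ∪ S2 ∪ S3 ∪ S4) S5 :=
    ((hd15.union_left hd25).union_left hd35).union_left hd45
  have D4 : Disjoint (S1 ∪ S2 ∪ S3) S4 := (hd14.union_left hd24).union_left hd34
  have D3 : Disjoint (S1 ∪ S2) S3 := hd13.union_left hd23
  have hU : volume (S1 ∪ S2 ∪ S3 ∪ S4 ∪ S5 ∪ S6 ∪ S7) =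
      volume S1 + volume S2 + volume S3 + volume S4 + volume S5 + volume S6 + volume S7 := by
    rw [measure_union D7 m7, measure_union D6 m6, measure_union D5 m5, measure_union D4 m4,
      measure_union D3 m3, measure_union hd12 m2]
  -- the total area
  have harea : (45*ρ/56 - 0) * ((1/2 - 11*ρ/32) - 0) + (-m - 0) * ((1/2 - 11*ρ/32)^2 - 0^2) / 2
      + ((45*ρ/56 - (11*ρ/24 - 2/3)) * ((1/2 - ρ/4) - (1/2 - 11*ρ/32))
        + (-m - 4/3) * ((1/2 - ρ/4)^2 - (1/2 - 11*ρ/32)^2) / 2)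
      + (((29*ρ/56 + 2/7) - (11*ρ/24 - 2/3)) * ((1/2 - ρ/80) - (1/2 - ρ/4))
        + (-4/7 - 4/3) * ((1/2 - ρ/80)^2 - (1/2 - ρ/4)^2) / 2)
      + (((13*ρ/24 - 2/3) - (11*ρ/24 - 2/3)) * ((1/2 + ρ/80) - (1/2 - ρ/80))
        + (4/3 - 4/3) * ((1/2 + ρ/80)^2 - (1/2 - ρ/80)^2) / 2)
      + (((13*ρ/24 - 2/3) - (27*ρ/56 + 2/7)) * ((1/2 + ρ/4) - (1/2 + ρ/80))
        + (4/3 - (-4/7)) * ((1/2 + ρ/4)^2 - (1/2 + ρ/80)^2) / 2)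
      + (((13*ρ/24 - 2/3) - (11*ρ/56 + m)) * ((1/2 + 11*ρ/32) - (1/2 + ρ/4))
        + (4/3 - (-m)) * ((1/2 + 11*ρ/32)^2 - (1/2 + ρ/4)^2) / 2)
      + ((ρ - (11*ρ/56 + m)) * (1 - (1/2 + 11*ρ/32))
        + (0 - (-m)) * (1^2 - (1/2 + 11*ρ/32)^2) / 2)
      = ρ/2 + ρ*(2080 - 2049*ρ)/8960 := by
    rw [hmdef]
    field_simp [show (14:ℝ) - ρ*7 ≠ 0 by linarith]
    ring
  -- put everything together
  refine lt_of_lt_of_le ?_ (measure_mono hsub)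
  calc ENNReal.ofReal (ρ/2) < ENNReal.ofReal (ρ/2 + ρ*(2080 - 2049*ρ)/8960) := by
        refine (ENNReal.ofReal_lt_ofReal_iff ?_).2 ?_
        · nlinarith
        · nlinarith
    _ ≤ volume (e2 ⁻¹' (S1 ∪ S2 ∪ S3 ∪ S4 ∪ S5 ∪ S6 ∪ S7)) := by
        rw [e2_mp.measure_preimage (((((((m1.union m2).union m3).union m4).union m5).union
          m6).union m7).nullMeasurableSet)]
        rw [hU, hv1, hv2, hv3, hv4, hv5, hv6, hv7, ← harea]
        refine le_trans ENNReal.ofReal_add_le (add_le_add ?_ le_rfl)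
        refine le_trans ENNReal.ofReal_add_le (add_le_add ?_ le_rfl)
        refine le_trans ENNReal.ofReal_add_le (add_le_add ?_ le_rfl)
        refine le_trans ENNReal.ofReal_add_le (add_le_add ?_ le_rfl)
        refine le_trans ENNReal.ofReal_add_le (add_le_add ?_ le_rfl)
        exact ENNReal.ofReal_add_le
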